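/- Let ξ = e^{2πi/9} ∈ ℂ. For every nonzero v = (x1,x2,x3,x4) ∈ ℂ^4, one has rank(T(v)) ≤ 2 if and only if either (g1(v) = 0 and g2(v) = 0), or v is a nonzero scalar multiple of one of the four vectors (0,0,1,0), (−1,1,0,−1), (−1,ξ^3,0,−ξ^6), (−1,ξ^6,0,−ξ^3). Moreover this union is disjoint: none of these four vectors satisfies g1 = g2 = 0. (In the paper: the rank-2 locus D1 ⊂ P^3 of T is the disjoint union of the curve C = {g1 = g2 = 0}, isomorphic to the modular curve X(9), and four points.) -/

import Mathlib

/-- The 5×5 alternating matrix `T` of quadrics in `x1,…,x4` (from the `(1,9)` case),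
evaluated at a point `v ∈ ℂ⁴` (here `v 0 = x1, …, v 3 = x4`). -/
def matrixT (v : Fin 4 → ℂ) : Matrix (Fin 5) (Fin 5) ℂ :=
  !![0, v 0 ^ 2, v 1 ^ 2, v 2 ^ 2, v 3 ^ 2;
     -(v 0 ^ 2), 0, v 0 * v 2, v 1 * v 3, -(v 2 * v 3);
     -(v 1 ^ 2), -(v 0 * v 2), 0, -(v 0 * v 3), -(v 1 * v 2);
     -(v 2 ^ 2), -(v 1 * v 3), v 0 * v 3, 0, -(v 0 * v 1);
     -(v 3 ^ 2), v 2 * v 3, v 1 * v 2, v 0 * v 1, 0]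

/-- `g1 = x1²x2 − x2²x4 − x1x4²`. -/
def polyG1 (v : Fin 4 → ℂ) : ℂ := v 0 ^ 2 * v 1 - v 1 ^ 2 * v 3 - v 0 * v 3 ^ 2

/-- `g2 = x1x2² − x3³ + x1²x4 − x2x4²`. -/
def polyG2 (v : Fin 4 → ℂ) : ℂ := v 0 * v 1 ^ 2 - v 2 ^ 3 + v 0 ^ 2 * v 3 - v 1 * v 3 ^ 2

private lemma rank_le_two_aux (A : Matrix (Fin 5) (Fin 5) ℂ) (u w a b : Fin 5 → ℂ)
    (h : ∀ i j, A i j = a j * u i + b j * w i) : A.rank ≤ 2 := by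
  classical
  have hle : LinearMap.range A.mulVecLin ≤ Submodule.span ℂ {u, w} := by
    rintro x ⟨y, rfl⟩
    have hx : A.mulVecLin y = (∑ j, a j * y j) • u + (∑ j, b j * y j) • w := by
      funext i
      simp only [Matrix.mulVecLin_apply, Matrix.mulVec, dotProduct, Pi.add_apply,
        Pi.smul_apply, smul_eq_mul, Finset.sum_mul]
      rw [← Finset.sum_add_distrib]
      refine Finset.sum_congr rfl fun j _ => ?_
      simp only [h i j]; ring
    rw [hx]
    exact Submodule.add_mem _
      (Submodule.smul_mem _ _ (Submodule.subset_span (by simp)))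
      (Submodule.smul_mem _ _ (Submodule.subset_span (by simp)))
  refine (Submodule.finrank_mono hle).trans ?_
  refine (finrank_span_le_card _).trans ?_
  simp only [Set.toFinset_insert, Set.toFinset_singleton]
  exact (Finset.card_insert_le _ _).trans (by simp)

private lemma submatrix_rank_le (A : Matrix (Fin 5) (Fin 5) ℂ) (f g : Fin 4 → Fin 5) :
    (A.submatrix f g).rank ≤ A.rank := by
  have h1 : A.submatrix f id =
      ((1 : Matrix (Fin 5) (Fin 5) ℂ).submatrix f (Equiv.refl (Fin 5))) * A := by
    rw [Matrix.one_submatrix_mul]; simp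
  have h2 : A.submatrix f g =
      (A.submatrix f id) * ((1 : Matrix (Fin 5) (Fin 5) ℂ).submatrix (Equiv.refl (Fin 5)) g) := by
    rw [Matrix.mul_submatrix_one]
    simp [Matrix.submatrix_submatrix]
  calc (A.submatrix f g).rank ≤ (A.submatrix f id).rank := by
        rw [h2]; exact Matrix.rank_mul_le_left _ _
    _ ≤ A.rank := by rw [h1]; exact Matrix.rank_mul_le_right _ _

private lemma q_zero_of_rank {v : Fin 4 → ℂ} (h : (matrixT v).rank ≤ 2) (f : Fin 4 → Fin 5)
    (Q : ℂ) (hdet : ((matrixT v).submatrix f f).det = Q ^ 2) : Q = 0 := by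
  by_contra hQ
  have hu : IsUnit ((matrixT v).submatrix f f).det := by
    rw [hdet]; exact (pow_ne_zero 2 hQ).isUnit
  have h4 : ((matrixT v).submatrix f f).rank = 4 := by
    rw [Matrix.rank_of_isUnit _ ((Matrix.isUnit_iff_isUnit_det _).2 hu)]; simp
  have := submatrix_rank_le (matrixT v) f f
  omega
set_option maxHeartbeats 1600000 in
lemma key_rank (v : Fin 4 → ℂ) (hv : v ≠ 0)
    (hQ1 : v 0 * v 2 ^ 3 - v 0 ^ 3 * v 3 - v 1 ^ 3 * v 3 = 0)
    (hQ2 : v 2 * (v 0 ^ 2 * v 1 - v 1 ^ 2 * v 3 - v 0 * v 3 ^ 2) = 0)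
    (hQ3 : -(v 0 ^ 3 * v 1) + v 2 ^ 3 * v 3 + v 1 * v 3 ^ 3 = 0)
    (hQ4 : -(v 0 * v 1 ^ 3) + v 1 * v 2 ^ 3 - v 0 * v 3 ^ 3 = 0) :
    (matrixT v).rank ≤ 2 := by
  have hex : ∃ m, v m ≠ 0 := by
    by_contra h
    push_neg at h
    exact hv (funext h)
  obtain ⟨m, hm⟩ := hex
  fin_cases m
  · have h0 : v 0 ≠ 0 := by simpa using hm
    have h2 : (v 0 : ℂ) ^ 2 ≠ 0 := pow_ne_zero _ h0
    have h' : ∀ i j, v 0 ^ 2 * matrixT v i j =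
        matrixT v 0 i * matrixT v 1 j - matrixT v 1 i * matrixT v 0 j := by
      intro i j
      fin_cases i <;> fin_cases j <;>
        simp [matrixT] <;>
        first
          | ring1
          | linear_combination hQ1
          | linear_combination (-1 : ℂ) * hQ1
          | linear_combination hQ2
          | linear_combination (-1 : ℂ) * hQ2
          | linear_combination hQ3
          | linear_combination (-1 : ℂ) * hQ3
          | linear_combination hQ4
          | linear_combination (-1 : ℂ) * hQ4
    refine rank_le_two_aux _ (fun i => matrixT v 0 i) (fun i => matrixT v 1 i)
      (fun j => matrixT v 1 j * ((v 0 ^ 2)⁻¹)) (fun j => -(matrixT v 0 j) * ((v 0 ^ 2)⁻¹)) ?_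
    intro i j
    have := h' i j
    field_simp
    linear_combination this
  · have h0 : v 1 ≠ 0 := by simpa using hm
    have h2 : (v 1 : ℂ) ^ 2 ≠ 0 := pow_ne_zero _ h0
    have h' : ∀ i j, v 1 ^ 2 * matrixT v i j =
        matrixT v 0 i * matrixT v 2 j - matrixT v 2 i * matrixT v 0 j := by
      intro i j
      fin_cases i <;> fin_cases j <;>
        simp [matrixT] <;>
        first
          | ring1
          | linear_combination hQ1
          | linear_combination (-1 : ℂ) * hQ1
          | linear_combination hQ2
          | linear_combination (-1 : ℂ) * hQ2
          | linear_combination hQ3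
          | linear_combination (-1 : ℂ) * hQ3
          | linear_combination hQ4
          | linear_combination (-1 : ℂ) * hQ4
    refine rank_le_two_aux _ (fun i => matrixT v 0 i) (fun i => matrixT v 2 i)
      (fun j => matrixT v 2 j * ((v 1 ^ 2)⁻¹)) (fun j => -(matrixT v 0 j) * ((v 1 ^ 2)⁻¹)) ?_
    intro i j
    have := h' i j
    field_simp
    linear_combination this
  · have h0 : v 2 ≠ 0 := by simpa using hm
    have h2 : (v 2 : ℂ) ^ 2 ≠ 0 := pow_ne_zero _ h0
    have h' : ∀ i j, v 2 ^ 2 * matrixT v i j =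
        matrixT v 0 i * matrixT v 3 j - matrixT v 3 i * matrixT v 0 j := by
      intro i j
      fin_cases i <;> fin_cases j <;>
        simp [matrixT] <;>
        first
          | ring1
          | linear_combination hQ1
          | linear_combination (-1 : ℂ) * hQ1
          | linear_combination hQ2
          | linear_combination (-1 : ℂ) * hQ2
          | linear_combination hQ3
          | linear_combination (-1 : ℂ) * hQ3
          | linear_combination hQ4
          | linear_combination (-1 : ℂ) * hQ4
    refine rank_le_two_aux _ (fun i => matrixT v 0 i) (fun i => matrixT v 3 i)
      (fun j => matrixT v 3 j * ((v 2 ^ 2)⁻¹)) (fun j => -(matrixT v 0 j) * ((v 2 ^ 2)⁻¹)) ?_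
    intro i j
    have := h' i j
    field_simp
    linear_combination this
  · have h0 : v 3 ≠ 0 := by simpa using hm
    have h2 : (v 3 : ℂ) ^ 2 ≠ 0 := pow_ne_zero _ h0
    have h' : ∀ i j, v 3 ^ 2 * matrixT v i j =
        matrixT v 0 i * matrixT v 4 j - matrixT v 4 i * matrixT v 0 j := by
      intro i j
      fin_cases i <;> fin_cases j <;>
        simp [matrixT] <;>
        first
          | ring1
          | linear_combination hQ1
          | linear_combination (-1 : ℂ) * hQ1
          | linear_combination hQ2
          | linear_combination (-1 : ℂ) * hQ2
          | linear_combination hQ3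
          | linear_combination (-1 : ℂ) * hQ3
          | linear_combination hQ4
          | linear_combination (-1 : ℂ) * hQ4
    refine rank_le_two_aux _ (fun i => matrixT v 0 i) (fun i => matrixT v 4 i)
      (fun j => matrixT v 4 j * ((v 3 ^ 2)⁻¹)) (fun j => -(matrixT v 0 j) * ((v 3 ^ 2)⁻¹)) ?_
    intro i j
    have := h' i j
    field_simp
    linear_combination this

private lemma rank_point (c ω : ℂ) (hc : c ≠ 0) (hω : ω ^ 3 = 1) :
    (matrixT ![-c, c * ω ^ 2, 0, -(c * ω)]).rank ≤ 2 := by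
  apply key_rank
  · intro h
    apply hc
    have h0 := congrFun h 0
    simp at h0
    exact h0
  · simp only [Matrix.cons_val_zero, Matrix.cons_val_one, Matrix.head_cons,
      Matrix.cons_val_two, Matrix.tail_cons, Matrix.cons_val_three]
    linear_combination (c ^ 4 * ω * (ω ^ 3 + 1)) * hω
  · simp only [Matrix.cons_val_zero, Matrix.cons_val_one, Matrix.head_cons,
      Matrix.cons_val_two, Matrix.tail_cons, Matrix.cons_val_three]
    ring
  · simp only [Matrix.cons_val_zero, Matrix.cons_val_one, Matrix.head_cons,
      Matrix.cons_val_two, Matrix.tail_cons, Matrix.cons_val_three]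
    linear_combination (-(c ^ 4 * ω ^ 2)) * hω
  · simp only [Matrix.cons_val_zero, Matrix.cons_val_one, Matrix.head_cons,
      Matrix.cons_val_two, Matrix.tail_cons, Matrix.cons_val_three]
    linear_combination (c ^ 4 * ω ^ 3) * hω

private lemma z_facts :
    (Complex.exp (2 * Real.pi * Complex.I / 9)) ^ 9 = 1 ∧
    (Complex.exp (2 * Real.pi * Complex.I / 9)) ^ 3 ≠ 1 ∧
    Complex.exp (2 * Real.pi * Complex.I / 9) ≠ 0 := by
  refine ⟨?_, ?_, Complex.exp_ne_zero _⟩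
  · rw [← Complex.exp_nat_mul]
    have h9 : ((9 : ℕ) : ℂ) * (2 * Real.pi * Complex.I / 9) = 2 * Real.pi * Complex.I := by
      push_cast; ring
    rw [h9, Complex.exp_two_pi_mul_I]
  · intro h
    rw [← Complex.exp_nat_mul, Complex.exp_eq_one_iff] at h
    obtain ⟨n, hn⟩ := h
    have hpi : (Real.pi : ℂ) ≠ 0 := Complex.ofReal_ne_zero.2 Real.pi_ne_zero
    have h2 : (2 * (Real.pi : ℂ) * Complex.I) ≠ 0 := by
      simp [hpi, Complex.I_ne_zero]
    push_cast at hn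
    have key : (2 * (Real.pi : ℂ) * Complex.I) * (3 - 9 * n) = 0 := by
      linear_combination 9 * hn
    have h30 : (3 - 9 * (n : ℂ)) = 0 := (mul_eq_zero.1 key).resolve_left h2
    have : (3 - 9 * n : ℤ) = 0 := by exact_mod_cast h30
    omega

theorem matrixT_rank_le_two_iff :
    (∀ v : Fin 4 → ℂ, v ≠ 0 →
      ((matrixT v).rank ≤ 2 ↔
        (polyG1 v = 0 ∧ polyG2 v = 0) ∨
        ∃ c : ℂ, c ≠ 0 ∧
          (v = c • ![0, 0, 1, 0] ∨
           v = c • ![-1, 1, 0, -1] ∨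
           v = c • ![-1, Complex.exp (2 * Real.pi * Complex.I / 9) ^ 3, 0,
                     -(Complex.exp (2 * Real.pi * Complex.I / 9) ^ 6)] ∨
           v = c • ![-1, Complex.exp (2 * Real.pi * Complex.I / 9) ^ 6, 0,
                     -(Complex.exp (2 * Real.pi * Complex.I / 9) ^ 3)]))) ∧
    ¬(polyG1 ![0, 0, 1, 0] = 0 ∧ polyG2 ![0, 0, 1, 0] = 0) ∧
    ¬(polyG1 ![-1, 1, 0, -1] = 0 ∧ polyG2 ![-1, 1, 0, -1] = 0) ∧
    ¬(polyG1 ![-1, Complex.exp (2 * Real.pi * Complex.I / 9) ^ 3, 0,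
               -(Complex.exp (2 * Real.pi * Complex.I / 9) ^ 6)] = 0 ∧
      polyG2 ![-1, Complex.exp (2 * Real.pi * Complex.I / 9) ^ 3, 0,
               -(Complex.exp (2 * Real.pi * Complex.I / 9) ^ 6)] = 0) ∧
    ¬(polyG1 ![-1, Complex.exp (2 * Real.pi * Complex.I / 9) ^ 6, 0,
               -(Complex.exp (2 * Real.pi * Complex.I / 9) ^ 3)] = 0 ∧
      polyG2 ![-1, Complex.exp (2 * Real.pi * Complex.I / 9) ^ 6, 0,
               -(Complex.exp (2 * Real.pi * Complex.I / 9) ^ 3)] = 0) := by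
  set z : ℂ := Complex.exp (2 * Real.pi * Complex.I / 9) with hzdef
  obtain ⟨hz9, hz3, hz0⟩ := z_facts
  rw [← hzdef] at hz9 hz3 hz0
  have hsum : z ^ 6 + z ^ 3 + 1 = 0 := by
    have hfac : (z ^ 3 - 1) * (z ^ 6 + z ^ 3 + 1) = 0 := by linear_combination hz9
    exact (mul_eq_zero.1 hfac).resolve_left (sub_ne_zero.2 hz3)
  have cube : ∀ ω : ℂ, ω ^ 3 = 1 → ω = 1 ∨ ω = z ^ 3 ∨ ω = z ^ 6 := by
    intro ω hω
    have hfac : (ω - 1) * ((ω - z ^ 3) * (ω - z ^ 6)) = 0 := by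
      linear_combination hω + (ω - ω ^ 2) * hsum + (ω - 1) * hz9
    rcases mul_eq_zero.1 hfac with h | h
    · exact Or.inl (sub_eq_zero.1 h)
    · rcases mul_eq_zero.1 h with h | h
      · exact Or.inr (Or.inl (sub_eq_zero.1 h))
      · exact Or.inr (Or.inr (sub_eq_zero.1 h))
  have h12 : (z ^ 6) ^ 2 = z ^ 3 := by linear_combination z ^ 3 * hz9
  refine ⟨?_, ?_, ?_, ?_, ?_⟩
  · intro v hv
    constructor
    · -- forward direction
      intro hrank
      have hsA1 : (Fin.succAbove 1 2 : Fin 4) = 3 := rfl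
      have hsA2 : (Fin.succAbove 2 2 : Fin 4) = 3 := rfl
      have hsA3 : (Fin.castSucc 2 : Fin 4) = 2 := rfl
      have hQ1 : v 0 * v 2 ^ 3 - v 0 ^ 3 * v 3 - v 1 ^ 3 * v 3 = 0 := by
        refine q_zero_of_rank hrank ![0, 1, 2, 3] _ ?_
        simp [Matrix.det_succ_row_zero, Fin.sum_univ_succ, matrixT, hsA1, hsA2, hsA3,
          show (Fin.succAbove 3 2 : Fin 4) = 2 from rfl, -Matrix.submatrix_cons_row]
        ring
      have hQ2 : v 2 * (v 0 ^ 2 * v 1 - v 1 ^ 2 * v 3 - v 0 * v 3 ^ 2) = 0 := by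
        refine q_zero_of_rank hrank ![0, 1, 2, 4] _ ?_
        simp [Matrix.det_succ_row_zero, Fin.sum_univ_succ, matrixT, hsA1, hsA2, hsA3,
          show (Fin.succAbove 3 2 : Fin 4) = 2 from rfl, -Matrix.submatrix_cons_row]
        ring
      have hQ3 : -(v 0 ^ 3 * v 1) + v 2 ^ 3 * v 3 + v 1 * v 3 ^ 3 = 0 := by
        refine q_zero_of_rank hrank ![0, 1, 3, 4] _ ?_
        simp [Matrix.det_succ_row_zero, Fin.sum_univ_succ, matrixT, hsA1, hsA2, hsA3,
          show (Fin.succAbove 3 2 : Fin 4) = 2 from rfl, -Matrix.submatrix_cons_row]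
        ring
      have hQ4 : -(v 0 * v 1 ^ 3) + v 1 * v 2 ^ 3 - v 0 * v 3 ^ 3 = 0 := by
        refine q_zero_of_rank hrank ![0, 2, 3, 4] _ ?_
        simp [Matrix.det_succ_row_zero, Fin.sum_univ_succ, matrixT, hsA1, hsA2, hsA3,
          show (Fin.succAbove 3 2 : Fin 4) = 2 from rfl, -Matrix.submatrix_cons_row]
        ring
      have hE1 : v 1 * polyG1 v - v 0 * polyG2 v = 0 := by
        simp only [polyG1, polyG2]; linear_combination hQ1
      have hE2 : v 2 * polyG1 v = 0 := by
        simp only [polyG1]; linear_combination hQ2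
      have hE3 : v 0 * polyG1 v + v 3 * polyG2 v = 0 := by
        simp only [polyG1, polyG2]; linear_combination (-1 : ℂ) * hQ3
      have hE4 : v 1 * polyG2 v - v 3 * polyG1 v = 0 := by
        simp only [polyG1, polyG2]; linear_combination (-1 : ℂ) * hQ4
      by_cases hg1 : polyG1 v = 0
      · by_cases hg2 : polyG2 v = 0
        · exact Or.inl ⟨hg1, hg2⟩
        · have h0 : v 0 = 0 :=
            (mul_eq_zero.1 (show v 0 * polyG2 v = 0 by
              linear_combination v 1 * hg1 - hE1)).resolve_right hg2
          have h3 : v 3 = 0 :=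
            (mul_eq_zero.1 (show v 3 * polyG2 v = 0 by
              linear_combination hE3 - v 0 * hg1)).resolve_right hg2
          have h1 : v 1 = 0 :=
            (mul_eq_zero.1 (show v 1 * polyG2 v = 0 by
              linear_combination hE4 + v 3 * hg1)).resolve_right hg2
          have h2ne : v 2 ≠ 0 := by
            intro h2
            apply hv
            funext i; fin_cases i <;> simp [h0, h1, h2, h3]
          refine Or.inr ⟨v 2, h2ne, Or.inl ?_⟩
          funext i; fin_cases i <;> simp [h0, h1, h3]
      · have h2x : v 2 = 0 := (mul_eq_zero.1 hE2).resolve_right hg1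
        have h0ne : v 0 ≠ 0 := by
          intro h0
          have h30 : v 3 * polyG2 v = 0 := by
            linear_combination hE3 - polyG1 v * h0
          rcases mul_eq_zero.1 h30 with h3 | hg2'
          · apply hg1; simp only [polyG1]; rw [h0, h3]; ring
          · have h10 : v 1 * polyG1 v = 0 := by
              linear_combination hE1 + v 0 * hg2'
            rcases mul_eq_zero.1 h10 with h1 | h
            · apply hg1; simp only [polyG1]; rw [h0, h1]; ring
            · exact hg1 h
        have hg2 : polyG2 v ≠ 0 := by
          intro hg2'
          have h10 : v 1 * polyG1 v = 0 := by
            linear_combination hE1 + v 0 * hg2'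
          have h1 : v 1 = 0 := (mul_eq_zero.1 h10).resolve_right hg1
          have h30 : v 3 * polyG1 v = 0 := by
            linear_combination (-1 : ℂ) * hE4 + v 1 * hg2'
          have h3 : v 3 = 0 := (mul_eq_zero.1 h30).resolve_right hg1
          apply hg1; simp only [polyG1]; rw [h1, h3]; ring
        have hR1 : v 0 ^ 2 + v 1 * v 3 = 0 :=
          (mul_eq_zero.1 (show (v 0 ^ 2 + v 1 * v 3) * polyG2 v = 0 by
            linear_combination v 1 * hE3 - v 0 * hE1)).resolve_right hg2
        have hR2 : v 1 ^ 2 - v 0 * v 3 = 0 :=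
          (mul_eq_zero.1 (show (v 1 ^ 2 - v 0 * v 3) * polyG1 v = 0 by
            linear_combination v 1 * hE1 + v 0 * hE4)).resolve_right hg1
        have h3ne : v 3 ≠ 0 := by
          intro h3
          apply h0ne
          have h00 : v 0 ^ 2 = 0 := by linear_combination hR1 - v 1 * h3
          exact pow_eq_zero_iff two_ne_zero |>.1 h00
        have hc3 : v 0 ^ 3 = v 3 ^ 3 :=
          mul_left_cancel₀ h0ne (show v 0 * v 0 ^ 3 = v 0 * v 3 ^ 3 by
            linear_combination (v 0 ^ 2 - v 1 * v 3) * hR1 + v 3 ^ 2 * hR2)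
        have hR3 : v 0 * v 1 + v 3 ^ 2 = 0 :=
          mul_left_cancel₀ h0ne (show v 0 * (v 0 * v 1 + v 3 ^ 2) = v 0 * 0 by
            linear_combination v 1 * hR1 - v 3 * hR2)
        set ω := v 3 / v 0 with hw
        have hω3 : ω ^ 3 = 1 := by
          rw [hw, div_pow, ← hc3, div_self (pow_ne_zero 3 h0ne)]
        have hv1 : v 1 = -(v 0) * ω ^ 2 := by
          rw [hw, div_pow]
          field_simp
          first
            | linear_combination hR3
            | linear_combination v 0 * hR3
            | linear_combination (-(v 0)) * hR3
            | linear_combination v 0 ^ 2 * hR3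
            | linear_combination (-(v 0 ^ 2)) * hR3
        have hv3 : v 3 = -(-(v 0) * ω) := by
          rw [hw]
          field_simp
        refine Or.inr ⟨-(v 0), neg_ne_zero.2 h0ne, ?_⟩
        rcases cube ω hω3 with hΩ | hΩ | hΩ <;> rw [hΩ] at hv1 hv3
        · refine Or.inr (Or.inl ?_)
          funext i
          fin_cases i <;> simp <;>
            first
              | rfl
              | exact h2x
              | linear_combination hv1
              | linear_combination hv3
              | linear_combination (-1 : ℂ) * hv1
              | linear_combination (-1 : ℂ) * hv3
              | linear_combination hv1 - v 0 * h12
              | linear_combination hv1 + v 0 * h12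
              | linear_combination (-1 : ℂ) * hv1 - v 0 * h12
              | linear_combination (-1 : ℂ) * hv1 + v 0 * h12
              | ring1
        · refine Or.inr (Or.inr (Or.inr ?_))
          funext i
          fin_cases i <;> simp <;>
            first
              | rfl
              | exact h2x
              | linear_combination hv1
              | linear_combination hv3
              | linear_combination (-1 : ℂ) * hv1
              | linear_combination (-1 : ℂ) * hv3
              | linear_combination hv1 - v 0 * h12
              | linear_combination hv1 + v 0 * h12
              | linear_combination (-1 : ℂ) * hv1 - v 0 * h12
              | linear_combination (-1 : ℂ) * hv1 + v 0 * h12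
              | ring1
        · refine Or.inr (Or.inr (Or.inl ?_))
          funext i
          fin_cases i <;> simp <;>
            first
              | rfl
              | exact h2x
              | linear_combination hv1
              | linear_combination hv3
              | linear_combination (-1 : ℂ) * hv1
              | linear_combination (-1 : ℂ) * hv3
              | linear_combination hv1 - v 0 * h12
              | linear_combination hv1 + v 0 * h12
              | linear_combination (-1 : ℂ) * hv1 - v 0 * h12
              | linear_combination (-1 : ℂ) * hv1 + v 0 * h12
              | ring1
    · -- backward direction
      rintro (⟨hg1, hg2⟩ | ⟨c, hc, hveq | hveq | hveq | hveq⟩)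
      · refine key_rank v hv ?_ ?_ ?_ ?_ <;>
          simp only [polyG1, polyG2] at hg1 hg2
        · linear_combination v 1 * hg1 - v 0 * hg2
        · linear_combination v 2 * hg1
        · linear_combination (-(v 0)) * hg1 - v 3 * hg2
        · linear_combination v 3 * hg1 - v 1 * hg2
      · have hvv : v = ![0, 0, c, 0] := by
          rw [hveq]; funext i; fin_cases i <;> simp
        rw [hvv]
        refine key_rank _ ?_ ?_ ?_ ?_ ?_
        · intro h
          apply hc
          have := congrFun h 2
          simpa using this
        all_goals simp
      · have hvv : v = ![-c, c * (1 : ℂ) ^ 2, 0, -(c * 1)] := by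
          rw [hveq]; funext i; fin_cases i <;> simp
        rw [hvv]
        exact rank_point c 1 hc (one_pow 3)
      · have hvv : v = ![-c, c * (z ^ 6) ^ 2, 0, -(c * z ^ 6)] := by
          rw [hveq]; funext i; fin_cases i <;> simp
          · exact Or.inl h12.symm
        rw [hvv]
        refine rank_point c (z ^ 6) hc ?_
        linear_combination (z ^ 9 + 1) * hz9
      · have hvv : v = ![-c, c * (z ^ 3) ^ 2, 0, -(c * z ^ 3)] := by
          rw [hveq]; funext i; fin_cases i <;> simp
          · exact Or.inl (by ring)
        rw [hvv]
        refine rank_point c (z ^ 3) hc ?_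
        linear_combination hz9
  · rintro ⟨-, h2⟩
    norm_num [polyG2, Matrix.cons_val_two, Matrix.cons_val_three] at h2
  · rintro ⟨h1, -⟩
    norm_num [polyG1, Matrix.cons_val_two, Matrix.cons_val_three] at h1
  · rintro ⟨h1, -⟩
    simp only [polyG1, Matrix.cons_val_zero, Matrix.cons_val_one, Matrix.head_cons,
      Matrix.cons_val_two, Matrix.tail_cons, Matrix.cons_val_three] at h1
    have h3z : (3 : ℂ) * z ^ 3 = 0 := by linear_combination h1 - 2 * z ^ 3 * hz9
    exact mul_ne_zero three_ne_zero (pow_ne_zero 3 hz0) h3z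
  · rintro ⟨h1, -⟩
    simp only [polyG1, Matrix.cons_val_zero, Matrix.cons_val_one, Matrix.head_cons,
      Matrix.cons_val_two, Matrix.tail_cons, Matrix.cons_val_three] at h1
    have h3z : (3 : ℂ) * z ^ 6 = 0 := by linear_combination h1 - z ^ 6 * hz9
    exact mul_ne_zero three_ne_zero (pow_ne_zero 6 hz0) h3z
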